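/- Let n be a multiple of K ≥ 1, let the indices {1,…,n} be partitioned into clusters of equal size K with cluster labels S_i, let L > 0 and z_1,…,z_n ∈ ℝ^d, and let f ∈ 𝒢_L. Define the within-cluster averaged decoder f′ by f′ i j = log( (1/K) · ∑_{k : S_k = S_i} exp(f k j) ). Then: (a) f′ ∈ 𝒢_L (it satisfies both the sub-probability constraint ∑_i exp(f′ i j) ≤ 1 for every j and the L-Lipschitz constraint |f′ i j − f′ i ℓ| ≤ L·‖z_j − z_ℓ‖); and (b) the within-cluster denoising objective does not decrease: ∑_{j=1}^n ∑_{i : S_i = S_j} f′ i j ≥ ∑_{j=1}^n ∑_{i : S_i = S_j} f i j. Consequently, an optimal decoder may be assumed to assign equal probability to all points within a cluster. -/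

import Mathlib

open Real Finset

/-- The decoder class `𝒢_L`: log-likelihood tables `f i j = log p_G(x_i | z_j)` such that
(i) each column is a log sub-probability vector, and
(ii) the log-likelihood is `L`-Lipschitz in the latent variable. -/
def decoderClass {n d : ℕ} (L : ℝ) (z : Fin n → EuclideanSpace ℝ (Fin d)) :
    Set (Fin n → Fin n → ℝ) :=
  {f | (∀ j, ∑ i, Real.exp (f i j) ≤ 1) ∧
       ∀ i j k, |f i j - f i k| ≤ L * ‖z j - z k‖}

lemma one_sub_inv_le_log {t : ℝ} (ht : 0 < t) : 1 - t⁻¹ ≤ Real.log t := by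
  have h := Real.log_le_sub_one_of_pos (x := t⁻¹) (by positivity)
  rw [Real.log_inv] at h
  linarith

/-- Within-cluster averaging: given a decoder `f ∈ 𝒢_L` and clusters of equal size `K`,
the averaged decoder `f′ i j = log((1/K) ∑_{k : S_k = S_i} exp (f k j))` also lies in
`𝒢_L` and does not decrease the within-cluster denoising objective. -/
theorem stmt6 (n K : ℕ) (hK : 1 ≤ K) (hnK : K ∣ n) {ι : Type*} [Fintype ι]
    [DecidableEq ι] (S : Fin n → ι)
    (hfiber : ∀ c : ι, (Finset.univ.filter (fun i => S i = c)).card = K)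
    (d : ℕ) (L : ℝ) (hL : 0 < L) (z : Fin n → EuclideanSpace ℝ (Fin d))
    (f : Fin n → Fin n → ℝ) (hf : f ∈ decoderClass L z) :
    let f' : Fin n → Fin n → ℝ := fun i j =>
      Real.log ((1 / (K : ℝ)) *
        ∑ k ∈ Finset.univ.filter (fun k => S k = S i), Real.exp (f k j))
    f' ∈ decoderClass L z ∧
      ∑ j, ∑ i ∈ Finset.univ.filter (fun i => S i = S j), f' i j ≥
        ∑ j, ∑ i ∈ Finset.univ.filter (fun i => S i = S j), f i j := by
  obtain ⟨hf1, hf2⟩ := hf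
  intro f'
  have hKpos : (0:ℝ) < K := by exact_mod_cast hK
  set A : ι → Fin n → ℝ := fun c j =>
    ∑ k ∈ Finset.univ.filter (fun k => S k = c), Real.exp (f k j) with hA
  have hAne : ∀ c : ι, (Finset.univ.filter (fun i => S i = c)).Nonempty := by
    intro c
    rw [← Finset.card_pos, hfiber c]
    exact hK
  have hApos : ∀ (c : ι) (j : Fin n), 0 < A c j := fun c j =>
    Finset.sum_pos (fun k _ => Real.exp_pos _) (hAne c)
  -- key: |log (A c j) - log (A c k)| ≤ L * ‖z j - z k‖
  have key : ∀ (c : ι) (j k : Fin n),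
      Real.log (A c j) - Real.log (A c k) ≤ L * ‖z j - z k‖ := by
    intro c j k
    have hle : A c j ≤ Real.exp (L * ‖z j - z k‖) * A c k := by
      rw [hA, Finset.mul_sum]
      refine Finset.sum_le_sum fun i _ => ?_
      rw [← Real.exp_add]
      apply Real.exp_le_exp.2
      have := (abs_le.1 (hf2 i j k)).2
      linarith
    have := Real.log_le_log (hApos c j) hle
    rw [Real.log_mul (Real.exp_pos _).ne' (hApos c k).ne', Real.log_exp] at this
    linarith
  constructor
  · constructor
    · -- column sums
      intro j
      have hsum : ∀ i : Fin n, Real.exp (f' i j) = (1 / (K : ℝ)) * A (S i) j := by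
        intro i
        exact Real.exp_log (by positivity)
      calc ∑ i, Real.exp (f' i j) = ∑ i, (1 / (K : ℝ)) * A (S i) j := by
            simp [hsum]
        _ = ∑ c : ι, ∑ i ∈ Finset.univ.filter (fun i => S i = c),
              (1 / (K : ℝ)) * A (S i) j := by
            rw [Finset.sum_fiberwise]
        _ = ∑ c : ι, A c j := by
            refine Finset.sum_congr rfl fun c _ => ?_
            rw [Finset.sum_congr rfl (fun i hi => by
              rw [(Finset.mem_filter.1 hi).2]), Finset.sum_const, hfiber c,
              nsmul_eq_mul]
            field_simp
        _ = ∑ k, Real.exp (f k j) := Finset.sum_fiberwise _ _ _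
        _ ≤ 1 := hf1 j
    · -- Lipschitz
      intro i j k
      have heq : ∀ l : Fin n, f' i l = Real.log (1 / (K:ℝ)) + Real.log (A (S i) l) := by
        intro l
        exact Real.log_mul (by positivity) (hApos (S i) l).ne'
      rw [heq j, heq k]
      rw [abs_sub_le_iff]
      constructor
      · have := key (S i) j k; linarith
      · have := key (S i) k j
        rw [norm_sub_rev] at this
        linarith
  · -- objective does not decrease
    refine Finset.sum_le_sum fun j _ => ?_
    set c := S j
    set T := Finset.univ.filter (fun i => S i = c) with hT
    have havg : 0 < (1 / (K:ℝ)) * A c j := by positivity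
    have hf'eq : ∀ i ∈ T, f' i j = Real.log ((1 / (K:ℝ)) * A c j) := by
      intro i hi
      have : S i = c := (Finset.mem_filter.1 hi).2
      simp only [f', this]
      rfl
    have hbound : ∀ i ∈ T,
        f i j ≤ Real.log ((1 / (K:ℝ)) * A c j) - 1
          + Real.exp (f i j) / ((1 / (K:ℝ)) * A c j) := by
      intro i hi
      have ht : 0 < ((1 / (K:ℝ)) * A c j) / Real.exp (f i j) := by positivity
      have h1 := one_sub_inv_le_log ht
      rw [Real.log_div havg.ne' (Real.exp_pos _).ne', Real.log_exp] at h1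
      have : (((1 / (K:ℝ)) * A c j) / Real.exp (f i j))⁻¹
          = Real.exp (f i j) / ((1 / (K:ℝ)) * A c j) := by
        rw [inv_div]
      rw [this] at h1
      linarith
    calc ∑ i ∈ T, f i j
        ≤ ∑ i ∈ T, (Real.log ((1 / (K:ℝ)) * A c j) - 1
            + Real.exp (f i j) / ((1 / (K:ℝ)) * A c j)) :=
          Finset.sum_le_sum hbound
      _ = (K : ℝ) * (Real.log ((1 / (K:ℝ)) * A c j) - 1)
            + (∑ i ∈ T, Real.exp (f i j)) / ((1 / (K:ℝ)) * A c j) := by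
          rw [Finset.sum_add_distrib, Finset.sum_const, Finset.sum_div]
          have : T.card = K := hfiber c
          rw [this, nsmul_eq_mul]
      _ = (K : ℝ) * Real.log ((1 / (K:ℝ)) * A c j) := by
          have hAT : ∑ i ∈ T, Real.exp (f i j) = A c j := rfl
          rw [hAT]
          field_simp
          rw [div_self (hApos c j).ne']
          ring
      _ = ∑ i ∈ T, f' i j := by
          rw [Finset.sum_congr rfl hf'eq, Finset.sum_const, hfiber c, nsmul_eq_mul]
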